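/- Let x̂_{k:N} ∈ S^(N−k+1) and let f_{k:N} be a non-degenerate policy belonging to 𝔓(x̂_{k:N}). Then for every j ∈ {k, …, N}: (1) μ_{j|j}(D̄_j) = 1; and (2) if q_j < 1, the probability measure ν_j defined by ν_j(A) = (1 − q_j)^(−1) ∫_A (1 − f_j) dμ_{j|j−1} satisfies ν_j(Ḏ_j) = 0. -/

import Mathlib

open MeasureTheory Filter
open scoped ENNReal NNReal Topology

noncomputable section

/-- The state space `S = ℝ² × [0, 2π)`. -/
abbrev S : Type := {x : ℝ × ℝ × ℝ // x.2.2 ∈ Set.Ico (0 : ℝ) (2 * Real.pi)}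

/-- The metric `d` on `S`. -/
noncomputable def dS (x y : S) : ℝ :=
  Real.sqrt ((x.1.1 - y.1.1) ^ 2 + (x.1.2.1 - y.1.2.1) ^ 2
    + 2 * (Real.cos x.1.2.2 - Real.cos y.1.2.2) ^ 2
    + 2 * (Real.sin x.1.2.2 - Real.sin y.1.2.2) ^ 2)

/-- The initial state `x₀ = (0,0,0)`. -/
def origin : S := ⟨(0, 0, 0), ⟨le_rfl, by positivity⟩⟩

/-- `κ` is a Markov kernel on `S`. -/
def IsMarkov (κ : S → Measure S) : Prop :=
  (∀ x, IsProbabilityMeasure (κ x)) ∧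
    ∀ A : Set S, MeasurableSet A → Measurable fun x => κ x A

/-- Continuity of a real-valued function with respect to the metric `dS`. -/
def DContinuous (g : S → ℝ) : Prop :=
  ∀ x : S, ∀ ε : ℝ, 0 < ε → ∃ δ : ℝ, 0 < δ ∧ ∀ y : S, dS x y < δ → |g y - g x| < ε

/-- Openness with respect to the metric `dS`. -/
def DOpen (O : Set S) : Prop :=
  ∀ x ∈ O, ∃ δ : ℝ, 0 < δ ∧ ∀ y : S, dS x y < δ → y ∈ O

/-- Assumption 1 on the kernel `κ`. -/
def Assumption1 (κ : S → Measure S) : Prop :=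
  (∀ A : Set S, MeasurableSet A → DContinuous fun x => (κ x A).toReal) ∧
    ∀ O : Set S, DOpen O → O.Nonempty → ∀ x : S, 0 < κ x O

/-- Auxiliary downward value recursion; the first argument is the number
`N + 1 - j` of remaining stages. -/
noncomputable def Jaux (κ : S → Measure S) (c' : ℕ → ℝ) (xhat : ℕ → S) :
    ℕ → ℕ → S → ℝ≥0∞
  | 0, _, _ => 0
  | m + 1, j, x =>
      min (ENNReal.ofReal (dS x (xhat j) ^ 2) + ∫⁻ y, Jaux κ c' xhat m (j + 1) y ∂(κ x))
        (ENNReal.ofReal (c' j))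

/-- The optimal cost-to-go `J*_j(x, x̂_{j:N})`. -/
noncomputable def JJ (κ : S → Measure S) (c' : ℕ → ℝ) (N : ℕ) (xhat : ℕ → S)
    (j : ℕ) (x : S) : ℝ≥0∞ :=
  Jaux κ c' xhat (N + 1 - j) j x

/-- `G_j(x, x̂_{j:N}) = ∫ J*_j(y, x̂_{j:N}) κ(x)(dy)`. -/
noncomputable def Gj (κ : S → Measure S) (c' : ℕ → ℝ) (N : ℕ) (xhat : ℕ → S)
    (j : ℕ) (x : S) : ℝ≥0∞ :=
  ∫⁻ y, JJ κ c' N xhat j y ∂(κ x)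

/-- `G(x̂_{k:N}) = G_k(x₀, x̂_{k:N})`. -/
noncomputable def Gtot (κ : S → Measure S) (c' : ℕ → ℝ) (k N : ℕ) (xhat : ℕ → S) : ℝ≥0∞ :=
  Gj κ c' N xhat k origin

/-- A randomized policy: a tuple of Borel measurable functions `f_j : S → [0,1]`. -/
def IsPolicy (k N : ℕ) (f : ℕ → S → ℝ≥0∞) : Prop :=
  ∀ j, k ≤ j → j ≤ N → Measurable (f j) ∧ ∀ x, f j x ≤ 1

/-- Auxiliary cost-to-go recursion for a policy; first argument is `N + 1 - j`. -/
noncomputable def Vaux (κ : S → Measure S) (c' : ℕ → ℝ) (xhat : ℕ → S)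
    (f : ℕ → S → ℝ≥0∞) : ℕ → ℕ → S → ℝ≥0∞
  | 0, _, _ => 0
  | m + 1, j, x =>
      f j x * (ENNReal.ofReal (dS x (xhat j) ^ 2) + ∫⁻ y, Vaux κ c' xhat f m (j + 1) y ∂(κ x))
        + (1 - f j x) * ENNReal.ofReal (c' j)

/-- The cost-to-go `V_j` of a policy `f` with estimates `x̂`. -/
noncomputable def VV (κ : S → Measure S) (c' : ℕ → ℝ) (N : ℕ) (xhat : ℕ → S)
    (f : ℕ → S → ℝ≥0∞) (j : ℕ) (x : S) : ℝ≥0∞ :=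
  Vaux κ c' xhat f (N + 1 - j) j x

/-- The total expected cost `C(f_{k:N}, x̂_{k:N})`. -/
noncomputable def Cost (κ : S → Measure S) (c' : ℕ → ℝ) (k N : ℕ) (xhat : ℕ → S)
    (f : ℕ → S → ℝ≥0∞) : ℝ≥0∞ :=
  ∫⁻ y, VV κ c' N xhat f k y ∂(κ origin)

/-- `f ∈ 𝔓(x̂_{k:N})`: `f` minimizes the cost over all randomized policies. -/
def inP (κ : S → Measure S) (c' : ℕ → ℝ) (k N : ℕ) (xhat : ℕ → S)
    (f : ℕ → S → ℝ≥0∞) : Prop :=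
  IsPolicy k N f ∧
    ∀ g : ℕ → S → ℝ≥0∞, IsPolicy k N g → Cost κ c' k N xhat f ≤ Cost κ c' k N xhat g

/-- `x̂ ∈ 𝔛(f_{k:N})`: the estimates minimize the cost for the policy `f`. -/
def inX (κ : S → Measure S) (c' : ℕ → ℝ) (k N : ℕ) (f : ℕ → S → ℝ≥0∞)
    (xhat : ℕ → S) : Prop :=
  ∀ yhat : ℕ → S, Cost κ c' k N xhat f ≤ Cost κ c' k N yhat f

/-- Conditioning a measure on "no transmission" at stage `j`. -/
noncomputable def condMeas (f : ℕ → S → ℝ≥0∞) (j : ℕ) (μ : Measure S) : Measure S :=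
  (∫⁻ x, f j x ∂μ)⁻¹ • μ.withDensity (f j)

/-- The predicted measures `μ_{j|j−1}`, by recursion on `j - k`. -/
noncomputable def mupredAux (κ : S → Measure S) (f : ℕ → S → ℝ≥0∞) (k : ℕ) :
    ℕ → Measure S
  | 0 => κ origin
  | n + 1 => (condMeas f (k + n) (mupredAux κ f k n)).bind κ

/-- `μ_{j|j−1}`. -/
noncomputable def mupred (κ : S → Measure S) (f : ℕ → S → ℝ≥0∞) (k j : ℕ) : Measure S :=
  mupredAux κ f k (j - k)

/-- `q_j = ∫ f_j dμ_{j|j−1}`. -/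
noncomputable def qq (κ : S → Measure S) (f : ℕ → S → ℝ≥0∞) (k j : ℕ) : ℝ≥0∞ :=
  ∫⁻ x, f j x ∂(mupred κ f k j)

/-- `μ_{j|j}`. -/
noncomputable def mucond (κ : S → Measure S) (f : ℕ → S → ℝ≥0∞) (k j : ℕ) : Measure S :=
  condMeas f j (mupred κ f k j)

/-- Non-degeneracy of a policy. -/
def NonDeg (κ : S → Measure S) (f : ℕ → S → ℝ≥0∞) (k N : ℕ) : Prop :=
  ∀ j, k ≤ j → j ≤ N → 0 < qq κ f k j

/-- The closed "no transmission" region `D̄_j`. -/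
noncomputable def Dbar (κ : S → Measure S) (c' : ℕ → ℝ) (N : ℕ) (xhat : ℕ → S)
    (j : ℕ) : Set S :=
  {x : S | ENNReal.ofReal (dS x (xhat j) ^ 2) + ∫⁻ y, JJ κ c' N xhat (j + 1) y ∂(κ x)
      ≤ ENNReal.ofReal (c' j)}

/-- The open "no transmission" region `Ḏ_j`. -/
noncomputable def Dund (κ : S → Measure S) (c' : ℕ → ℝ) (N : ℕ) (xhat : ℕ → S)
    (j : ℕ) : Set S :=
  {x : S | ENNReal.ofReal (dS x (xhat j) ^ 2) + ∫⁻ y, JJ κ c' N xhat (j + 1) y ∂(κ x)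
      < ENNReal.ofReal (c' j)}

/-- Hypothesis (H). -/
def HypH (κ : S → Measure S) (c' : ℕ → ℝ) (k N : ℕ) : Prop :=
  ∀ j, k ≤ j → j ≤ N → ∃ xhat : ℕ → S, (Dund κ c' N xhat j).Nonempty

/-- Weak convergence of measures on `(S, dS)`: tested against `dS`-continuous
bounded functions. -/
def WeakConvS (μl : ℕ → Measure S) (μ : Measure S) : Prop :=
  ∀ h : S → ℝ, DContinuous h → (∃ C : ℝ, ∀ x, |h x| ≤ C) →
    Tendsto (fun l => ∫ x, h x ∂(μl l)) atTop (𝓝 (∫ x, h x ∂μ))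

/-- Convergence of a sequence of (non-degenerate) policies to a policy. -/
def PolConv (κ : S → Measure S) (k N : ℕ) (g : ℕ → ℕ → S → ℝ≥0∞)
    (f : ℕ → S → ℝ≥0∞) : Prop :=
  ∀ j, k ≤ j → j ≤ N →
    WeakConvS (fun l => mucond κ (g l) k j) (mucond κ f k j) ∧
      Tendsto (fun l => qq κ (g l) k j) atTop (𝓝 (qq κ f k j))

section AuxLemmas

lemma key_pointwise {f A A' c : ℝ≥0∞} (hf1 : f ≤ 1) (hAA : A' ≤ A) (hA' : A' ≠ ∞)
    (hc : c ≠ ∞) (heq : f * A + (1 - f) * c = min A' c) :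
    (f ≠ 0 → A = A') ∧ (A' < c → f = 1) ∧ (c < A' → f = 0) := by
  have hf : f ≠ ∞ := (hf1.trans_lt ENNReal.one_lt_top).ne
  have h1f : (1 - f) ≠ ∞ := ((tsub_le_self).trans_lt ENNReal.one_lt_top).ne
  have hid : ∀ B : ℝ≥0∞, f * B + (1 - f) * B = B := fun B => by
    rw [← add_mul, add_tsub_cancel_of_le hf1, one_mul]
  refine ⟨?_, ?_, ?_⟩
  · intro hf0
    by_contra hne
    have hlt : A' < A := hAA.lt_of_ne fun h => hne h.symm
    have hlow : min A' c ≤ f * A' + (1 - f) * c := by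
      calc min A' c = f * min A' c + (1 - f) * min A' c := (hid _).symm
        _ ≤ f * A' + (1 - f) * c :=
          add_le_add (mul_le_mul_right (min_le_left _ _) _)
            (mul_le_mul_right (min_le_right _ _) _)
    have : min A' c < min A' c :=
      calc min A' c ≤ f * A' + (1 - f) * c := hlow
        _ < f * A + (1 - f) * c :=
          ENNReal.add_lt_add_right (ENNReal.mul_ne_top h1f hc)
            (ENNReal.mul_lt_mul_right hf0 hf hlt)
        _ = min A' c := heq
    exact lt_irrefl _ this
  · intro hlt
    by_contra hne
    have h1f0 : (1 - f) ≠ 0 := fun h => hne (le_antisymm hf1 (tsub_eq_zero_iff_le.mp h))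
    rw [min_eq_left hlt.le] at heq
    have : A' < A' :=
      calc A' = f * A' + (1 - f) * A' := (hid _).symm
        _ < f * A' + (1 - f) * c :=
          ENNReal.add_lt_add_left (ENNReal.mul_ne_top hf hA')
            (ENNReal.mul_lt_mul_right h1f0 h1f hlt)
        _ ≤ f * A + (1 - f) * c := add_le_add_left (mul_le_mul_right hAA _) _
        _ = A' := heq
    exact lt_irrefl _ this
  · intro hlt
    by_contra hf0
    rw [min_eq_right hlt.le] at heq
    have : c < c :=
      calc c = f * c + (1 - f) * c := (hid _).symm
        _ < f * A' + (1 - f) * c :=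
          ENNReal.add_lt_add_right (ENNReal.mul_ne_top h1f hc)
            (ENNReal.mul_lt_mul_right hf0 hf hlt)
        _ ≤ f * A + (1 - f) * c := add_le_add_left (mul_le_mul_right hAA _) _
        _ = c := heq
    exact lt_irrefl _ this

lemma measurable_kernel {κ : S → Measure S} (hκ : IsMarkov κ) : Measurable κ :=
  Measure.measurable_of_measurable_coe _ fun A hA => hκ.2 A hA

lemma measurable_klint {κ : S → Measure S} (hκ : IsMarkov κ) {g : S → ℝ≥0∞}
    (hg : Measurable g) : Measurable fun x => ∫⁻ y, g y ∂(κ x) :=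
  (Measure.measurable_lintegral hg).comp (measurable_kernel hκ)

lemma measurable_dsq (z : S) :
    Measurable fun x : S => ENNReal.ofReal (dS x z ^ 2) := by
  apply ENNReal.measurable_ofReal.comp
  have h : Continuous fun v : ℝ × ℝ × ℝ =>
      Real.sqrt ((v.1 - z.1.1) ^ 2 + (v.2.1 - z.1.2.1) ^ 2
        + 2 * (Real.cos v.2.2 - Real.cos z.1.2.2) ^ 2
        + 2 * (Real.sin v.2.2 - Real.sin z.1.2.2) ^ 2) ^ 2 := by fun_prop
  exact h.measurable.comp measurable_subtype_coe

lemma measurable_Jaux {κ : S → Measure S} (hκ : IsMarkov κ) (c' : ℕ → ℝ) (xhat : ℕ → S) :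
    ∀ m j, Measurable (Jaux κ c' xhat m j)
  | 0, _ => measurable_const
  | m + 1, j => by
      simp only [Jaux]
      exact ((measurable_dsq (xhat j)).add
        (measurable_klint hκ (measurable_Jaux hκ c' xhat m (j + 1)))).min measurable_const

lemma measurable_JJ {κ : S → Measure S} (hκ : IsMarkov κ) (c' : ℕ → ℝ) (N : ℕ)
    (xhat : ℕ → S) (j : ℕ) : Measurable (JJ κ c' N xhat j) :=
  measurable_Jaux hκ c' xhat _ _

lemma JJ_le (κ : S → Measure S) (c' : ℕ → ℝ) {N : ℕ} (xhat : ℕ → S) {j : ℕ}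
    (hj : j ≤ N) (x : S) : JJ κ c' N xhat j x ≤ ENNReal.ofReal (c' j) := by
  show Jaux κ c' xhat (N + 1 - j) j x ≤ _
  have h : N + 1 - j = (N - j) + 1 := by omega
  rw [h]
  simp only [Jaux]
  exact min_le_right _ _

lemma JJ_succ (κ : S → Measure S) (c' : ℕ → ℝ) {N : ℕ} (xhat : ℕ → S) {j : ℕ}
    (hj : j ≤ N) (x : S) :
    JJ κ c' N xhat j x =
      min (ENNReal.ofReal (dS x (xhat j) ^ 2) + ∫⁻ y, JJ κ c' N xhat (j + 1) y ∂(κ x))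
        (ENNReal.ofReal (c' j)) := by
  show Jaux κ c' xhat (N + 1 - j) j x = _
  have h : N + 1 - j = (N - j) + 1 := by omega
  have h2 : N + 1 - (j + 1) = N - j := by omega
  rw [h]
  simp only [Jaux, JJ, h2]

lemma measurable_Vaux {κ : S → Measure S} (hκ : IsMarkov κ) (c' : ℕ → ℝ) (xhat : ℕ → S)
    (f : ℕ → S → ℝ≥0∞) :
    ∀ m j, (∀ i, j ≤ i → i < j + m → Measurable (f i)) → Measurable (Vaux κ c' xhat f m j)
  | 0, _, _ => measurable_const
  | m + 1, j, hf => by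
      simp only [Vaux]
      have hfj : Measurable (f j) := hf j le_rfl (by omega)
      have hin : Measurable (Vaux κ c' xhat f m (j + 1)) :=
        measurable_Vaux hκ c' xhat f m (j + 1) fun i hi hi' => hf i (by omega) (by omega)
      exact (hfj.mul ((measurable_dsq (xhat j)).add (measurable_klint hκ hin))).add
        ((measurable_const.sub hfj).mul measurable_const)

lemma Jaux_le_Vaux (κ : S → Measure S) (c' : ℕ → ℝ) (xhat : ℕ → S) (f : ℕ → S → ℝ≥0∞) :
    ∀ m j, (∀ i, j ≤ i → i < j + m → ∀ x, f i x ≤ 1) →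
      ∀ x, Jaux κ c' xhat m j x ≤ Vaux κ c' xhat f m j x
  | 0, _, _, _ => le_rfl
  | m + 1, j, hf, x => by
      simp only [Jaux, Vaux]
      have hfx : f j x ≤ 1 := hf j le_rfl (by omega) x
      have hIH : ∀ y, Jaux κ c' xhat m (j + 1) y ≤ Vaux κ c' xhat f m (j + 1) y :=
        Jaux_le_Vaux κ c' xhat f m (j + 1) fun i hi hi' => hf i (by omega) (by omega)
      have hA : ENNReal.ofReal (dS x (xhat j) ^ 2) + ∫⁻ y, Jaux κ c' xhat m (j + 1) y ∂(κ x)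
          ≤ ENNReal.ofReal (dS x (xhat j) ^ 2) + ∫⁻ y, Vaux κ c' xhat f m (j + 1) y ∂(κ x) :=
        add_le_add_right (lintegral_mono fun y => hIH y) _
      calc min (ENNReal.ofReal (dS x (xhat j) ^ 2)
            + ∫⁻ y, Jaux κ c' xhat m (j + 1) y ∂(κ x)) (ENNReal.ofReal (c' j))
          = f j x * min _ _ + (1 - f j x) * min _ _ := by
            rw [← add_mul, add_tsub_cancel_of_le hfx, one_mul]
        _ ≤ _ :=
          add_le_add (mul_le_mul_right ((min_le_left _ _).trans hA) _)
            (mul_le_mul_right (min_le_right _ _) _)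

end AuxLemmas

section AuxLemmas2

lemma measurableSet_Dbar {κ : S → Measure S} (hκ : IsMarkov κ) (c' : ℕ → ℝ) (N : ℕ)
    (xhat : ℕ → S) (j : ℕ) : MeasurableSet (Dbar κ c' N xhat j) :=
  measurableSet_le ((measurable_dsq (xhat j)).add
    (measurable_klint hκ (measurable_JJ hκ c' N xhat (j + 1)))) measurable_const

lemma measurableSet_Dund {κ : S → Measure S} (hκ : IsMarkov κ) (c' : ℕ → ℝ) (N : ℕ)
    (xhat : ℕ → S) (j : ℕ) : MeasurableSet (Dund κ c' N xhat j) :=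
  measurableSet_lt ((measurable_dsq (xhat j)).add
    (measurable_klint hκ (measurable_JJ hκ c' N xhat (j + 1)))) measurable_const

/-- The deterministic threshold policy. -/
noncomputable def gstar (κ : S → Measure S) (c' : ℕ → ℝ) (N : ℕ) (xhat : ℕ → S) :
    ℕ → S → ℝ≥0∞ := fun j => (Dbar κ c' N xhat j).indicator fun _ => 1

lemma gstar_policy {κ : S → Measure S} (hκ : IsMarkov κ) (c' : ℕ → ℝ) (k N : ℕ)
    (xhat : ℕ → S) : IsPolicy k N (gstar κ c' N xhat) := by
  intro j _ _
  refine ⟨measurable_const.indicator (measurableSet_Dbar hκ c' N xhat j), fun x => ?_⟩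
  by_cases h : x ∈ Dbar κ c' N xhat j <;> simp [gstar, h]

lemma Vaux_gstar (κ : S → Measure S) (c' : ℕ → ℝ) (N : ℕ) (xhat : ℕ → S) :
    ∀ m j, j + m = N + 1 → ∀ x,
      Vaux κ c' xhat (gstar κ c' N xhat) m j x = Jaux κ c' xhat m j x
  | 0, _, _, _ => rfl
  | m + 1, j, hjm, x => by
      have hIH : ∀ y, Vaux κ c' xhat (gstar κ c' N xhat) m (j + 1) y
          = Jaux κ c' xhat m (j + 1) y :=
        fun y => Vaux_gstar κ c' N xhat m (j + 1) (by omega) y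
      have hm : N + 1 - (j + 1) = m := by omega
      have hJJ : JJ κ c' N xhat (j + 1) = Jaux κ c' xhat m (j + 1) := by
        unfold JJ
        rw [hm]
      simp only [Vaux, Jaux, lintegral_congr hIH]
      by_cases hx : x ∈ Dbar κ c' N xhat j
      · have hle : ENNReal.ofReal (dS x (xhat j) ^ 2)
            + ∫⁻ y, Jaux κ c' xhat m (j + 1) y ∂(κ x) ≤ ENNReal.ofReal (c' j) := by
          have := hx
          simp only [Dbar, Set.mem_setOf_eq, hJJ] at this
          exact this
        simp [gstar, Set.indicator_of_mem hx, min_eq_left hle]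
      · have hlt : ENNReal.ofReal (c' j) < ENNReal.ofReal (dS x (xhat j) ^ 2)
            + ∫⁻ y, Jaux κ c' xhat m (j + 1) y ∂(κ x) := by
          have := hx
          simp only [Dbar, Set.mem_setOf_eq, hJJ, not_le] at this
          exact this
        simp [gstar, Set.indicator_of_notMem hx, min_eq_right hlt.le]

lemma Cost_gstar (κ : S → Measure S) (c' : ℕ → ℝ) (k N : ℕ) (hk : k ≤ N) (xhat : ℕ → S) :
    Cost κ c' k N xhat (gstar κ c' N xhat) = ∫⁻ y, JJ κ c' N xhat k y ∂(κ origin) :=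
  lintegral_congr fun y => Vaux_gstar κ c' N xhat (N + 1 - k) k (by omega) y

end AuxLemmas2

section AuxLemmas3

lemma VV_succ (κ : S → Measure S) (c' : ℕ → ℝ) {N : ℕ} (xhat : ℕ → S)
    (f : ℕ → S → ℝ≥0∞) {j : ℕ} (hj : j ≤ N) (x : S) :
    VV κ c' N xhat f j x =
      f j x * (ENNReal.ofReal (dS x (xhat j) ^ 2) + ∫⁻ y, VV κ c' N xhat f (j + 1) y ∂(κ x))
        + (1 - f j x) * ENNReal.ofReal (c' j) := by
  show Vaux κ c' xhat f (N + 1 - j) j x = _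
  have h : N + 1 - j = (N - j) + 1 := by omega
  have h2 : N + 1 - (j + 1) = N - j := by omega
  rw [h]
  simp only [Vaux, VV, h2]

lemma mupred_base (κ : S → Measure S) (f : ℕ → S → ℝ≥0∞) (k : ℕ) :
    mupred κ f k k = κ origin := by
  unfold mupred
  rw [Nat.sub_self]
  rfl

lemma mupred_add (κ : S → Measure S) (f : ℕ → S → ℝ≥0∞) (k n : ℕ) :
    mupred κ f k (k + n) = mupredAux κ f k n := by
  unfold mupred
  rw [Nat.add_sub_cancel_left]

lemma mupred_succ (κ : S → Measure S) (f : ℕ → S → ℝ≥0∞) (k n : ℕ) :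
    mupred κ f k (k + n + 1) = (condMeas f (k + n) (mupred κ f k (k + n))).bind κ := by
  have h1 : k + n + 1 = k + (n + 1) := by omega
  rw [h1, mupred_add, mupred_add]
  rfl

end AuxLemmas3

/-- If a non-degenerate policy `f` belongs to `𝔓(x̂_{k:N})`, then (1) the
conditional measure `μ_{j|j}` is concentrated on `D̄_j`, and (2) when `q_j < 1`,
the conditional measure given a transmission at time `j` assigns measure zero
to `Ḏ_j`. -/
theorem optimal_policy_supported_on_decision_sets (κ : S → Measure S)
    (hκ : IsMarkov κ)
    (k N : ℕ) (hkN : k ≤ N) (c' : ℕ → ℝ) (hc' : ∀ j, k ≤ j → j ≤ N → 0 < c' j)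
    (xhat : ℕ → S) (f : ℕ → S → ℝ≥0∞) (hnd : NonDeg κ f k N)
    (hP : inP κ c' k N xhat f) :
    ∀ j, k ≤ j → j ≤ N →
      mucond κ f k j (Dbar κ c' N xhat j) = 1 ∧
      (qq κ f k j < 1 →
        ((1 - qq κ f k j)⁻¹ •
            (mupred κ f k j).withDensity (fun x => 1 - f j x))
          (Dund κ c' N xhat j) = 0) := by
  obtain ⟨hpol, hopt⟩ := hP
  have hκm : Measurable κ := measurable_kernel hκ
  have hfmeas : ∀ i, k ≤ i → i ≤ N → Measurable (f i) := fun i h1 h2 => (hpol i h1 h2).1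
  have hfle : ∀ i, k ≤ i → i ≤ N → ∀ x, f i x ≤ 1 := fun i h1 h2 => (hpol i h1 h2).2
  have hJmeas : ∀ j, Measurable (JJ κ c' N xhat j) := fun j => measurable_JJ hκ c' N xhat j
  have hVmeas : ∀ j, k ≤ j → Measurable (VV κ c' N xhat f j) := by
    intro j hj
    exact measurable_Vaux hκ c' xhat f (N + 1 - j) j fun i h1 h2 =>
      hfmeas i (hj.trans h1) (by omega)
  have hJleV : ∀ j, k ≤ j → ∀ x, JJ κ c' N xhat j x ≤ VV κ c' N xhat f j x := by
    intro j hj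
    exact Jaux_le_Vaux κ c' xhat f (N + 1 - j) j fun i h1 h2 =>
      hfle i (hj.trans h1) (by omega)
  have hIfin : ∀ (jj : ℕ) (x : S), jj ≤ N →
      (∫⁻ y, JJ κ c' N xhat (jj + 1) y ∂(κ x)) ≠ ∞ := by
    intro jj x hjj
    rcases lt_or_eq_of_le hjj with h | h
    · haveI := hκ.1 x
      have hb : (∫⁻ y, JJ κ c' N xhat (jj + 1) y ∂(κ x)) ≤ ENNReal.ofReal (c' (jj + 1)) := by
        calc (∫⁻ y, JJ κ c' N xhat (jj + 1) y ∂(κ x))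
            ≤ ∫⁻ _, ENNReal.ofReal (c' (jj + 1)) ∂(κ x) :=
              lintegral_mono fun y => JJ_le κ c' xhat (by omega) y
          _ = ENNReal.ofReal (c' (jj + 1)) := by simp
      exact (hb.trans_lt ENNReal.ofReal_lt_top).ne
    · have hz : ∀ y : S, JJ κ c' N xhat (jj + 1) y = 0 := by
        intro y
        show Jaux κ c' xhat (N + 1 - (jj + 1)) (jj + 1) y = 0
        have h0 : N + 1 - (jj + 1) = 0 := by omega
        rw [h0]
        rfl
      have hz' : (∫⁻ y, JJ κ c' N xhat (jj + 1) y ∂(κ x)) = 0 := by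
        simp [hz]
      simp [hz']
  have hbind_prob : ∀ ν : Measure S, IsProbabilityMeasure ν →
      IsProbabilityMeasure (ν.bind κ) := by
    intro ν hν
    haveI := hν
    constructor
    rw [Measure.bind_apply MeasurableSet.univ hκm.aemeasurable]
    have h1 : ∀ x : S, κ x Set.univ = 1 := fun x => by
      haveI := hκ.1 x; exact measure_univ
    simp only [h1, lintegral_one, measure_univ, mul_one]
  have hcond_univ : ∀ j, k ≤ j → j ≤ N → IsProbabilityMeasure (mupred κ f k j) →
      condMeas f j (mupred κ f k j) Set.univ = 1 := by
    intro j h1 h2 hp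
    haveI := hp
    have hq1 : qq κ f k j ≤ 1 := by
      calc qq κ f k j ≤ ∫⁻ _, 1 ∂(mupred κ f k j) :=
            lintegral_mono fun x => hfle j h1 h2 x
        _ = 1 := by simp
    rw [condMeas, Measure.smul_apply, smul_eq_mul,
      withDensity_apply _ MeasurableSet.univ, Measure.restrict_univ]
    exact ENNReal.inv_mul_cancel (hnd j h1 h2).ne'
      (hq1.trans_lt ENNReal.one_lt_top).ne
  have hprob : ∀ n, k + n ≤ N → IsProbabilityMeasure (mupred κ f k (k + n)) := by
    intro n
    induction n with
    | zero =>
      intro _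
      rw [Nat.add_zero, mupred_base]
      exact hκ.1 origin
    | succ n ih =>
      intro hn
      have hn' : k + n ≤ N := by omega
      have : mupred κ f k (k + (n + 1)) = (condMeas f (k + n) (mupred κ f k (k + n))).bind κ := by
        have h : k + (n + 1) = k + n + 1 := rfl
        rw [h, mupred_succ]
      rw [this]
      refine hbind_prob _ ?_
      constructor
      exact hcond_univ (k + n) (Nat.le_add_right k n) hn' (ih hn')
  have hAE : ∀ n, k + n ≤ N →
      JJ κ c' N xhat (k + n) =ᵐ[mupred κ f k (k + n)] VV κ c' N xhat f (k + n) := by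
    intro n
    induction n with
    | zero =>
      intro _
      rw [Nat.add_zero, mupred_base]
      haveI := hκ.1 origin
      have hcost : (∫⁻ y, VV κ c' N xhat f k y ∂(κ origin))
          ≤ ∫⁻ y, JJ κ c' N xhat k y ∂(κ origin) := by
        have h1 := hopt (gstar κ c' N xhat) (gstar_policy hκ c' k N xhat)
        rwa [Cost_gstar κ c' k N hkN xhat] at h1
      have hfin : (∫⁻ y, JJ κ c' N xhat k y ∂(κ origin)) ≠ ∞ := by
        have hb : (∫⁻ y, JJ κ c' N xhat k y ∂(κ origin)) ≤ ENNReal.ofReal (c' k) := by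
          calc (∫⁻ y, JJ κ c' N xhat k y ∂(κ origin))
              ≤ ∫⁻ _, ENNReal.ofReal (c' k) ∂(κ origin) :=
                lintegral_mono fun y => JJ_le κ c' xhat hkN y
            _ = ENNReal.ofReal (c' k) := by simp
        exact (hb.trans_lt ENNReal.ofReal_lt_top).ne
      exact ae_eq_of_ae_le_of_lintegral_le (ae_of_all _ (hJleV k le_rfl)) hfin
        (hVmeas k le_rfl).aemeasurable hcost
    | succ n ih =>
      intro hn
      have hjN : k + n ≤ N := by omega
      have hj1 : k + n + 1 ≤ N := by omega
      have ihae := ih hjN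
      haveI hp : IsProbabilityMeasure (mupred κ f k (k + n)) := hprob n hjN
      have hEset : {x : S | ¬ JJ κ c' N xhat (k + n + 1) x = VV κ c' N xhat f (k + n + 1) x}
          = {x : S | JJ κ c' N xhat (k + n + 1) x < VV κ c' N xhat f (k + n + 1) x} :=
        Set.ext fun x => ⟨fun h => (hJleV (k + n + 1) (by omega) x).lt_of_ne h,
          fun h => h.ne⟩
      have hEmeas : MeasurableSet
          {x : S | ¬ JJ κ c' N xhat (k + n + 1) x = VV κ c' N xhat f (k + n + 1) x} := by
        rw [hEset]
        exact measurableSet_lt (hJmeas (k + n + 1)) (hVmeas (k + n + 1) (by omega))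
      have hkey : ∀ᵐ x ∂(mupred κ f k (k + n)),
          f (k + n) x * κ x {x : S | ¬ JJ κ c' N xhat (k + n + 1) x
            = VV κ c' N xhat f (k + n + 1) x} = 0 := by
        filter_upwards [ihae] with x hx
        by_cases hf0 : f (k + n) x = 0
        · rw [hf0, zero_mul]
        · have heq : f (k + n) x * (ENNReal.ofReal (dS x (xhat (k + n)) ^ 2)
              + ∫⁻ y, VV κ c' N xhat f (k + n + 1) y ∂(κ x))
              + (1 - f (k + n) x) * ENNReal.ofReal (c' (k + n))
              = min (ENNReal.ofReal (dS x (xhat (k + n)) ^ 2)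
                + ∫⁻ y, JJ κ c' N xhat (k + n + 1) y ∂(κ x)) (ENNReal.ofReal (c' (k + n))) :=
            (VV_succ κ c' xhat f hjN x).symm.trans (hx.symm.trans (JJ_succ κ c' xhat hjN x))
          have hAA : ENNReal.ofReal (dS x (xhat (k + n)) ^ 2)
              + ∫⁻ y, JJ κ c' N xhat (k + n + 1) y ∂(κ x)
              ≤ ENNReal.ofReal (dS x (xhat (k + n)) ^ 2)
              + ∫⁻ y, VV κ c' N xhat f (k + n + 1) y ∂(κ x) :=
            add_le_add_right (lintegral_mono fun y => hJleV (k + n + 1) (by omega) y) _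
          have hA' : ENNReal.ofReal (dS x (xhat (k + n)) ^ 2)
              + ∫⁻ y, JJ κ c' N xhat (k + n + 1) y ∂(κ x) ≠ ∞ :=
            ENNReal.add_ne_top.mpr ⟨ENNReal.ofReal_ne_top, hIfin (k + n) x hjN⟩
          have hkp := key_pointwise (hfle (k + n) (Nat.le_add_right k n) hjN x) hAA hA'
            ENNReal.ofReal_ne_top heq
          have hinte : (∫⁻ y, VV κ c' N xhat f (k + n + 1) y ∂(κ x))
              = ∫⁻ y, JJ κ c' N xhat (k + n + 1) y ∂(κ x) :=
            (ENNReal.add_right_inj ENNReal.ofReal_ne_top).mp (hkp.1 hf0)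
          have hae2 : JJ κ c' N xhat (k + n + 1) =ᵐ[κ x] VV κ c' N xhat f (k + n + 1) :=
            ae_eq_of_ae_le_of_lintegral_le (ae_of_all _ (hJleV (k + n + 1) (by omega)))
              (hIfin (k + n) x hjN) (hVmeas (k + n + 1) (by omega)).aemeasurable hinte.le
          rw [ae_iff.mp hae2, mul_zero]
      have hbindE : mupred κ f k (k + n + 1)
          {x : S | ¬ JJ κ c' N xhat (k + n + 1) x = VV κ c' N xhat f (k + n + 1) x} = 0 := by
        have hgmeas : Measurable fun a : S => κ a {x : S | ¬ JJ κ c' N xhat (k + n + 1) x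
            = VV κ c' N xhat f (k + n + 1) x} := (Measure.measurable_coe hEmeas).comp hκm
        rw [mupred_succ κ f k n, Measure.bind_apply hEmeas hκm.aemeasurable, condMeas,
          lintegral_smul_measure,
          lintegral_withDensity_eq_lintegral_mul _ (hfmeas (k + n) (Nat.le_add_right k n) hjN)
            hgmeas]
        have hz : (∫⁻ x, (f (k + n) * fun a => κ a {x : S | ¬ JJ κ c' N xhat (k + n + 1) x
            = VV κ c' N xhat f (k + n + 1) x}) x ∂(mupred κ f k (k + n))) = 0 := by
          have he : (fun x => (f (k + n) * fun a => κ a {x : S | ¬ JJ κ c' N xhat (k + n + 1) x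
              = VV κ c' N xhat f (k + n + 1) x}) x) =ᵐ[mupred κ f k (k + n)]
              (fun _ => (0 : ℝ≥0∞)) := hkey.mono fun x hx => by simpa using hx
          rw [lintegral_congr_ae he, lintegral_zero]
        rw [hz, smul_zero]
      exact ae_iff.mpr hbindE
  intro j hkj hjN
  obtain ⟨n, rfl⟩ : ∃ n, j = k + n := ⟨j - k, by omega⟩
  have hn : k + n ≤ N := hjN
  haveI hp : IsProbabilityMeasure (mupred κ f k (k + n)) := hprob n hn
  have hconc : ∀ᵐ x ∂(mupred κ f k (k + n)),
      (x ∈ Dund κ c' N xhat (k + n) → f (k + n) x = 1) ∧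
      (x ∉ Dbar κ c' N xhat (k + n) → f (k + n) x = 0) := by
    filter_upwards [hAE n hn] with x hx
    have heq : f (k + n) x * (ENNReal.ofReal (dS x (xhat (k + n)) ^ 2)
        + ∫⁻ y, VV κ c' N xhat f (k + n + 1) y ∂(κ x))
        + (1 - f (k + n) x) * ENNReal.ofReal (c' (k + n))
        = min (ENNReal.ofReal (dS x (xhat (k + n)) ^ 2)
          + ∫⁻ y, JJ κ c' N xhat (k + n + 1) y ∂(κ x)) (ENNReal.ofReal (c' (k + n))) :=
      (VV_succ κ c' xhat f hn x).symm.trans (hx.symm.trans (JJ_succ κ c' xhat hn x))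
    have hAA : ENNReal.ofReal (dS x (xhat (k + n)) ^ 2)
        + ∫⁻ y, JJ κ c' N xhat (k + n + 1) y ∂(κ x)
        ≤ ENNReal.ofReal (dS x (xhat (k + n)) ^ 2)
        + ∫⁻ y, VV κ c' N xhat f (k + n + 1) y ∂(κ x) :=
      add_le_add_right (lintegral_mono fun y => hJleV (k + n + 1) (by omega) y) _
    have hkp := key_pointwise (hfle (k + n) hkj hjN x) hAA
      (ENNReal.add_ne_top.mpr ⟨ENNReal.ofReal_ne_top, hIfin (k + n) x hjN⟩)
      ENNReal.ofReal_ne_top heq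
    exact ⟨fun hmem => hkp.2.1 hmem, fun hmem => hkp.2.2 (lt_of_not_ge hmem)⟩
  constructor
  · have hwd : (mupred κ f k (k + n)).withDensity (f (k + n))
        (Dbar κ c' N xhat (k + n))ᶜ = 0 := by
      rw [withDensity_apply _ (measurableSet_Dbar hκ c' N xhat (k + n)).compl]
      have h0 : (fun x => f (k + n) x)
          =ᵐ[(mupred κ f k (k + n)).restrict (Dbar κ c' N xhat (k + n))ᶜ]
          (fun _ => (0 : ℝ≥0∞)) :=
        (ae_restrict_iff' (measurableSet_Dbar hκ c' N xhat (k + n)).compl).mpr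
          (hconc.mono fun x hx hmem => hx.2 hmem)
      rw [lintegral_congr_ae h0, lintegral_zero]
    have htot : mucond κ f k (k + n) Set.univ = 1 := hcond_univ (k + n) hkj hjN hp
    have hcompl0 : mucond κ f k (k + n) (Dbar κ c' N xhat (k + n))ᶜ = 0 := by
      show condMeas f (k + n) (mupred κ f k (k + n)) (Dbar κ c' N xhat (k + n))ᶜ = 0
      rw [condMeas, Measure.smul_apply, smul_eq_mul, hwd, mul_zero]
    have hsum := measure_add_measure_compl (μ := mucond κ f k (k + n))
      (measurableSet_Dbar hκ c' N xhat (k + n))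
    rw [hcompl0, add_zero, htot] at hsum
    exact hsum
  · intro _
    rw [Measure.smul_apply, smul_eq_mul,
      withDensity_apply _ (measurableSet_Dund hκ c' N xhat (k + n))]
    have h1 : (fun x => 1 - f (k + n) x)
        =ᵐ[(mupred κ f k (k + n)).restrict (Dund κ c' N xhat (k + n))]
        (fun _ => (0 : ℝ≥0∞)) :=
      (ae_restrict_iff' (measurableSet_Dund hκ c' N xhat (k + n))).mpr
        (hconc.mono fun x hx hmem => by
          show 1 - f (k + n) x = 0
          rw [hx.1 hmem, tsub_self])
    rw [lintegral_congr_ae h1, lintegral_zero, mul_zero]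

end
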